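/- Let G₁ and G₂ be digraphs with n₁ and n₂ vertices respectively, and let k ≥ 1 be an integer. Then the product digraph G₁ × G₂ has a k-TC-spanner of size at most S_k(G₁)·S_k(G₂) + n₁·S_k(G₂) + n₂·S_k(G₁); that is, S_k(G₁ × G₂) ≤ S_k(G₁)·S_k(G₂) + n₁·S_k(G₂) + n₂·S_k(G₁). -/

import Mathlib

/-- There is a directed walk of length at most `k` from `u` to `v` in the digraph
with edge relation `E`. -/
def distLE {V : Type*} (E : V → V → Prop) : ℕ → V → V → Prop
  | 0 => fun u v => u = v
  | n + 1 => fun u v => u = v ∨ ∃ w, E u w ∧ distLE E n w v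

/-- `H` is a `k`-transitive-closure-spanner of the digraph `E`: every edge of `H` is an
edge of the transitive closure of `E`, and whenever `E` has a directed path from `u` to `v`,
`H` has one of length at most `k`. -/
def IsTCSpanner {V : Type*} (E H : V → V → Prop) (k : ℕ) : Prop :=
  (∀ u v, H u v → u ≠ v ∧ Relation.TransGen E u v) ∧
  (∀ u v, Relation.ReflTransGen E u v → distLE H k u v)

/-- `Sk E k` : the minimum number of edges of a `k`-TC-spanner of the digraph `E`. -/
noncomputable def Sk {V : Type*} (E : V → V → Prop) (k : ℕ) : ℕ :=
  sInf {n | ∃ H : V → V → Prop, IsTCSpanner E H k ∧ ({p : V × V | H p.1 p.2}).ncard = n}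

/-- The product of two digraphs: edge from `(u,v)` to `(u',v')` iff `u = u'` and `(v,v')`
is an edge of `G₂`, or `v = v'` and `(u,u')` is an edge of `G₁`. -/
def prodDigraph {V₁ V₂ : Type*} (E₁ : V₁ → V₁ → Prop) (E₂ : V₂ → V₂ → Prop)
    (x y : V₁ × V₂) : Prop :=
  (x.1 = y.1 ∧ E₂ x.2 y.2) ∨ (x.2 = y.2 ∧ E₁ x.1 y.1)

/- Auxiliary lemmas -/

lemma distLE_refl {V : Type*} (E : V → V → Prop) (n : ℕ) (v : V) : distLE E n v v := by
  cases n with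
  | zero => rfl
  | succ n => exact Or.inl rfl

lemma lift₁ {V₁ V₂ : Type*} {H₁ : V₁ → V₁ → Prop} (H₂ : V₂ → V₂ → Prop)
    {HP : V₁ × V₂ → V₁ × V₂ → Prop}
    (hHP : ∀ u u' v, H₁ u u' → HP (u, v) (u', v)) :
    ∀ n u u' (v : V₂), distLE H₁ n u u' → distLE HP n (u, v) (u', v) := by
  intro n
  induction n with
  | zero => intro u u' v h; exact congrArg (·, v) h
  | succ n ih =>
    rintro u u' v (rfl | ⟨w, hw, hd⟩)
    · exact Or.inl rfl
    · exact Or.inr ⟨(w, v), hHP u w v hw, ih w u' v hd⟩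

lemma lift₂ {V₁ V₂ : Type*} (H₁ : V₁ → V₁ → Prop) {H₂ : V₂ → V₂ → Prop}
    {HP : V₁ × V₂ → V₁ × V₂ → Prop}
    (hHP : ∀ u v v', H₂ v v' → HP (u, v) (u, v')) :
    ∀ n (u : V₁) v v', distLE H₂ n v v' → distLE HP n (u, v) (u, v') := by
  intro n
  induction n with
  | zero => intro u v v' h; exact congrArg (u, ·) h
  | succ n ih =>
    rintro u v v' (rfl | ⟨w, hw, hd⟩)
    · exact Or.inl rfl
    · exact Or.inr ⟨(u, w), hHP u v w hw, ih u w v' hd⟩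

lemma combine {V₁ V₂ : Type*} {H₁ : V₁ → V₁ → Prop} {H₂ : V₂ → V₂ → Prop}
    {HP : V₁ × V₂ → V₁ × V₂ → Prop}
    (h1 : ∀ u u' v, H₁ u u' → HP (u, v) (u', v))
    (h2 : ∀ u v v', H₂ v v' → HP (u, v) (u, v'))
    (hD : ∀ u u' v v', H₁ u u' → H₂ v v' → HP (u, v) (u', v')) :
    ∀ n u u' v v', distLE H₁ n u u' → distLE H₂ n v v' → distLE HP n (u, v) (u', v') := by
  intro n
  induction n with
  | zero => rintro u u' v v' rfl rfl; rfl
  | succ n ih =>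
    rintro u u' v v' (rfl | ⟨w₁, hw₁, hd₁⟩) hb
    · exact lift₂ H₁ h2 (n + 1) u v v' hb
    · rcases hb with rfl | ⟨w₂, hw₂, hd₂⟩
      · exact lift₁ H₂ h1 (n + 1) u u' v (Or.inr ⟨w₁, hw₁, hd₁⟩)
      · exact Or.inr ⟨(w₁, w₂), hD u w₁ v w₂ hw₁ hw₂, ih w₁ u' w₂ v' hd₁ hd₂⟩

lemma transGen_lift₁ {V₁ V₂ : Type*} {E₁ : V₁ → V₁ → Prop} (E₂ : V₂ → V₂ → Prop)
    {u u' : V₁} (v : V₂) (h : Relation.TransGen E₁ u u') :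
    Relation.TransGen (prodDigraph E₁ E₂) (u, v) (u', v) := by
  induction h with
  | single h => exact Relation.TransGen.single (Or.inr ⟨rfl, h⟩)
  | tail _ h ih => exact ih.tail (Or.inr ⟨rfl, h⟩)

lemma transGen_lift₂ {V₁ V₂ : Type*} (E₁ : V₁ → V₁ → Prop) {E₂ : V₂ → V₂ → Prop}
    (u : V₁) {v v' : V₂} (h : Relation.TransGen E₂ v v') :
    Relation.TransGen (prodDigraph E₁ E₂) (u, v) (u, v') := by
  induction h with
  | single h => exact Relation.TransGen.single (Or.inl ⟨rfl, h⟩)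
  | tail _ h ih => exact ih.tail (Or.inl ⟨rfl, h⟩)

lemma reach_proj {V₁ V₂ : Type*} {E₁ : V₁ → V₁ → Prop} {E₂ : V₂ → V₂ → Prop}
    {x y : V₁ × V₂} (h : Relation.ReflTransGen (prodDigraph E₁ E₂) x y) :
    Relation.ReflTransGen E₁ x.1 y.1 ∧ Relation.ReflTransGen E₂ x.2 y.2 := by
  induction h with
  | refl => exact ⟨Relation.ReflTransGen.refl, Relation.ReflTransGen.refl⟩
  | tail _ h ih =>
    rcases h with ⟨h1, h2⟩ | ⟨h1, h2⟩
    · exact ⟨h1 ▸ ih.1, ih.2.tail h2⟩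
    · exact ⟨ih.1.tail h2, h1 ▸ ih.2⟩

lemma ncard_prod {α β : Type*} (s : Set α) (t : Set β) :
    (s ×ˢ t).ncard = s.ncard * t.ncard := by
  rw [← Nat.card_coe_set_eq, ← Nat.card_coe_set_eq, ← Nat.card_coe_set_eq,
    Nat.card_congr (Equiv.Set.prod s t), Nat.card_prod]

lemma Sk_mem {V : Type*} (E : V → V → Prop) (k : ℕ) (hk : 1 ≤ k) :
    ∃ H : V → V → Prop, IsTCSpanner E H k ∧ ({p : V × V | H p.1 p.2}).ncard = Sk E k := by
  have hsp : IsTCSpanner E (fun u v => u ≠ v ∧ Relation.TransGen E u v) k := by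
    constructor
    · exact fun u v h => h
    · intro u v h
      cases k with
      | zero => omega
      | succ m =>
        rcases eq_or_ne u v with rfl | hne
        · exact Or.inl rfl
        · refine Or.inr ⟨v, ⟨hne, ?_⟩, distLE_refl _ _ _⟩
          rcases Relation.reflTransGen_iff_eq_or_transGen.mp h with rfl | ht
          · exact absurd rfl hne
          · exact ht
  have hne : {n | ∃ H : V → V → Prop, IsTCSpanner E H k ∧
      ({p : V × V | H p.1 p.2}).ncard = n}.Nonempty := ⟨_, _, hsp, rfl⟩
  exact Nat.sInf_mem hne

/-- `S_k(G₁ × G₂) ≤ S_k(G₁)·S_k(G₂) + n₁·S_k(G₂) + n₂·S_k(G₁)`. -/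
theorem stmt12 {V₁ V₂ : Type} [Fintype V₁] [Fintype V₂]
    (E₁ : V₁ → V₁ → Prop) (E₂ : V₂ → V₂ → Prop) (k : ℕ) (hk : 1 ≤ k)
    (n₁ n₂ : ℕ) (hn₁ : n₁ = Fintype.card V₁) (hn₂ : n₂ = Fintype.card V₂) :
    Sk (prodDigraph E₁ E₂) k ≤ Sk E₁ k * Sk E₂ k + n₁ * Sk E₂ k + n₂ * Sk E₁ k := by
  classical
  obtain ⟨H₁, hsp₁, hc₁⟩ := Sk_mem E₁ k hk
  obtain ⟨H₂, hsp₂, hc₂⟩ := Sk_mem E₂ k hk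
  -- the spanner of the product
  set HP : V₁ × V₂ → V₁ × V₂ → Prop := fun x y =>
    (x.1 = y.1 ∧ H₂ x.2 y.2) ∨ (x.2 = y.2 ∧ H₁ x.1 y.1) ∨ (H₁ x.1 y.1 ∧ H₂ x.2 y.2) with hHP
  have hspan : IsTCSpanner (prodDigraph E₁ E₂) HP k := by
    constructor
    · rintro ⟨u, v⟩ ⟨u', v'⟩ (⟨h1, h2⟩ | ⟨h1, h2⟩ | ⟨h1, h2⟩)
      · obtain ⟨hne, ht⟩ := (hsp₂.1 _ _ h2)
        obtain rfl : u = u' := h1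
        exact ⟨by simp [hne], transGen_lift₂ E₁ u ht⟩
      · obtain ⟨hne, ht⟩ := (hsp₁.1 _ _ h2)
        obtain rfl : v = v' := h1
        exact ⟨by simp [hne], transGen_lift₁ E₂ v ht⟩
      · obtain ⟨hne₁, ht₁⟩ := (hsp₁.1 _ _ h1)
        obtain ⟨hne₂, ht₂⟩ := (hsp₂.1 _ _ h2)
        exact ⟨by simp [hne₁], (transGen_lift₁ E₂ v ht₁).trans (transGen_lift₂ E₁ u' ht₂)⟩
    · rintro ⟨u, v⟩ ⟨u', v'⟩ h
      obtain ⟨hr₁, hr₂⟩ := reach_proj h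
      exact combine (fun u u' v h => Or.inr (Or.inl ⟨rfl, h⟩))
        (fun u v v' h => Or.inl ⟨rfl, h⟩)
        (fun u u' v v' h1 h2 => Or.inr (Or.inr ⟨h1, h2⟩)) k u u' v v'
        (hsp₁.2 _ _ hr₁) (hsp₂.2 _ _ hr₂)
  have hle : Sk (prodDigraph E₁ E₂) k ≤
      ({p : (V₁ × V₂) × (V₁ × V₂) | HP p.1 p.2}).ncard :=
    Nat.sInf_le ⟨HP, hspan, rfl⟩
  refine hle.trans ?_
  -- split into three sets
  set A : Set ((V₁ × V₂) × (V₁ × V₂)) := {p | p.1.1 = p.2.1 ∧ H₂ p.1.2 p.2.2}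
  set B : Set ((V₁ × V₂) × (V₁ × V₂)) := {p | p.1.2 = p.2.2 ∧ H₁ p.1.1 p.2.1}
  set D : Set ((V₁ × V₂) × (V₁ × V₂)) := {p | H₁ p.1.1 p.2.1 ∧ H₂ p.1.2 p.2.2}
  have hunion : {p : (V₁ × V₂) × (V₁ × V₂) | HP p.1 p.2} = A ∪ B ∪ D := by
    ext p; simp only [hHP, A, B, D, Set.mem_setOf_eq, Set.mem_union]; tauto
  have hA : A.ncard = n₁ * Sk E₂ k := by
    have himg : A = (fun q : V₁ × (V₂ × V₂) => ((q.1, q.2.1), (q.1, q.2.2))) ''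
        ((Set.univ : Set V₁) ×ˢ {p : V₂ × V₂ | H₂ p.1 p.2}) := by
      ext ⟨⟨a, b⟩, ⟨c, d⟩⟩
      simp only [A, Set.mem_setOf_eq, Set.mem_image, Set.mem_prod, Set.mem_univ, true_and,
        Prod.mk.injEq]
      constructor
      · rintro ⟨rfl, h⟩; exact ⟨⟨a, b, d⟩, h, ⟨rfl, rfl⟩, rfl, rfl⟩
      · rintro ⟨⟨x, y, z⟩, h, ⟨rfl, rfl⟩, rfl, rfl⟩; exact ⟨rfl, h⟩
    rw [himg, Set.ncard_image_of_injective _ ?_, ncard_prod, Set.ncard_univ, hc₂, hn₁,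
      Nat.card_eq_fintype_card]
    rintro ⟨a, b, c⟩ ⟨x, y, z⟩ h
    simp only [Prod.mk.injEq] at h
    obtain ⟨⟨rfl, rfl⟩, -, rfl⟩ := h
    rfl
  have hB : B.ncard = n₂ * Sk E₁ k := by
    have himg : B = (fun q : V₂ × (V₁ × V₁) => ((q.2.1, q.1), (q.2.2, q.1))) ''
        ((Set.univ : Set V₂) ×ˢ {p : V₁ × V₁ | H₁ p.1 p.2}) := by
      ext ⟨⟨a, b⟩, ⟨c, d⟩⟩
      simp only [B, Set.mem_setOf_eq, Set.mem_image, Set.mem_prod, Set.mem_univ, true_and,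
        Prod.mk.injEq]
      constructor
      · rintro ⟨rfl, h⟩; exact ⟨⟨b, a, c⟩, h, ⟨rfl, rfl⟩, rfl, rfl⟩
      · rintro ⟨⟨x, y, z⟩, h, ⟨rfl, rfl⟩, rfl, rfl⟩; exact ⟨rfl, h⟩
    rw [himg, Set.ncard_image_of_injective _ ?_, ncard_prod, Set.ncard_univ, hc₁, hn₂,
      Nat.card_eq_fintype_card]
    rintro ⟨a, b, c⟩ ⟨x, y, z⟩ h
    simp only [Prod.mk.injEq] at h
    obtain ⟨⟨rfl, rfl⟩, rfl, -⟩ := h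
    rfl
  have hD : D.ncard = Sk E₁ k * Sk E₂ k := by
    have himg : D = (fun q : (V₁ × V₁) × (V₂ × V₂) => ((q.1.1, q.2.1), (q.1.2, q.2.2))) ''
        ({p : V₁ × V₁ | H₁ p.1 p.2} ×ˢ {p : V₂ × V₂ | H₂ p.1 p.2}) := by
      ext ⟨⟨a, b⟩, ⟨c, d⟩⟩
      simp only [D, Set.mem_setOf_eq, Set.mem_image, Set.mem_prod, Prod.mk.injEq]
      constructor
      · rintro ⟨h1, h2⟩; exact ⟨⟨⟨a, c⟩, b, d⟩, ⟨h1, h2⟩, ⟨rfl, rfl⟩, rfl, rfl⟩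
      · rintro ⟨⟨⟨x, y⟩, z, w⟩, ⟨h1, h2⟩, ⟨rfl, rfl⟩, rfl, rfl⟩; exact ⟨h1, h2⟩
    rw [himg, Set.ncard_image_of_injective _ ?_, ncard_prod, hc₁, hc₂]
    rintro ⟨⟨a, b⟩, c, d⟩ ⟨⟨x, y⟩, z, w⟩ h
    simp only [Prod.mk.injEq] at h
    obtain ⟨⟨rfl, rfl⟩, rfl, rfl⟩ := h
    rfl
  rw [hunion]
  calc (A ∪ B ∪ D).ncard ≤ (A ∪ B).ncard + D.ncard := Set.ncard_union_le _ _
    _ ≤ A.ncard + B.ncard + D.ncard := by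
        exact add_le_add_left (Set.ncard_union_le _ _) _
    _ = Sk E₁ k * Sk E₂ k + n₁ * Sk E₂ k + n₂ * Sk E₁ k := by rw [hA, hB, hD]; ring
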